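/- If (E_α)_{α ∈ Λ} is a family of Banach spaces each of which is isometrically isomorphic to a quotient of a closed subspace of an L^p-space (a QSL_p-space), then the ℓ^p-direct sum ℓ^p-⊕_{α ∈ Λ} E_α is again isometrically isomorphic to a quotient of a closed subspace of an L^p-space. -/

import Mathlib

open MeasureTheory

/-- A Banach space is a `QSL_p`-space if it is isometrically isomorphic to a
quotient of a closed subspace of an `L^p`-space `L^p(X, μ)`. -/
def IsQSLp (p : ENNReal) [Fact (1 ≤ p)] (E : Type*) [NormedAddCommGroup E] [NormedSpace ℂ E] : Prop :=
  ∃ (X : Type) (_ : MeasurableSpace X) (μ : Measure X)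
    (S : Submodule ℂ (Lp ℂ p μ)) (N : Submodule ℂ S),
      IsClosed (S : Set (Lp ℂ p μ)) ∧ IsClosed (N : Set S) ∧
        Nonempty (E ≃ₗᵢ[ℂ] (S ⧸ N))

section Machinery
open Set ENNReal

section SigmaMeas
variable {ι : Type*} {X : ι → Type*} [∀ i, MeasurableSpace (X i)]
lemma measurableSet_sigma_iff' {s : Set (Σ i, X i)} :
    MeasurableSet s ↔ ∀ i, MeasurableSet (Sigma.mk i ⁻¹' s) :=
  MeasurableSpace.measurableSet_iInf
lemma measurable_sigmaMk' (i : ι) : Measurable (Sigma.mk i : X i → Σ i, X i) :=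
  fun _ hs => measurableSet_sigma_iff'.1 hs i
lemma measurableEmbedding_sigmaMk' (i : ι) :
    MeasurableEmbedding (Sigma.mk i : X i → Σ i, X i) where
  injective := sigma_mk_injective
  measurable := measurable_sigmaMk' i
  measurableSet_image' := by
    intro s hs
    rw [measurableSet_sigma_iff']
    intro j
    rcases eq_or_ne j i with rfl | hj
    · rwa [Set.preimage_image_eq _ sigma_mk_injective]
    · convert MeasurableSet.empty
      ext t
      simp [Sigma.mk.inj_iff, hj.symm]

variable (μ : ∀ i, Measure (X i))
noncomputable def sigmaMeasure : Measure (Σ i, X i) :=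
  Measure.sum fun i => (μ i).map (Sigma.mk i)

lemma ae_sigmaMeasure {P : (Σ i, X i) → Prop} (h : ∀ i, ∀ᵐ t ∂ μ i, P ⟨i, t⟩) :
    ∀ᵐ z ∂ sigmaMeasure μ, P z := by
  set B : Set (Σ i, X i) := {z | z.2 ∈ toMeasurable (μ z.1) {t | ¬ P ⟨z.1, t⟩}} with hB
  have key : ∀ i, Sigma.mk i ⁻¹' B = toMeasurable (μ i) {t | ¬ P ⟨i, t⟩} := fun i => rfl
  have hBm : MeasurableSet B := by
    rw [measurableSet_sigma_iff']
    intro i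
    rw [key i]
    exact measurableSet_toMeasurable _ _
  have hBnull : sigmaMeasure μ B = 0 := by
    rw [sigmaMeasure, Measure.sum_apply _ hBm]
    have : ∀ i, ((μ i).map (Sigma.mk i)) B = 0 := by
      intro i
      rw [Measure.map_apply (measurable_sigmaMk' i) hBm]
      rw [key i, measure_toMeasurable]
      exact (h i)
    simp [this]
  refine measure_mono_null ?_ hBnull
  intro z hz
  exact subset_toMeasurable _ _ hz
end SigmaMeas

section Embed

variable {ι : Type*} {X : ι → Type*} [∀ i, MeasurableSpace (X i)]
  (μ : ∀ i, Measure (X i)) (p : ℝ≥0∞) [Fact (1 ≤ p)] (hp0 : p ≠ 0) (hp' : p ≠ ⊤)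

/-- The raw function on the sigma type associated to a family of `Lp` elements. -/
noncomputable def sigmaFun (x : lp (fun i => Lp ℂ p (μ i)) p) : (Σ i, X i) → ℂ :=
  fun z => x z.1 z.2

lemma sigmaFun_aesm (x : lp (fun i => Lp ℂ p (μ i)) p) :
    AEStronglyMeasurable (sigmaFun μ p x) (sigmaMeasure μ) := by
  choose g hgm hae using fun i => Lp.aestronglyMeasurable (x i)
  refine ⟨fun z => g z.1 z.2, ?_, ?_⟩
  · apply Measurable.stronglyMeasurable
    intro s hs
    rw [measurableSet_sigma_iff']
    intro i
    exact (hgm i).measurable hs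
  · exact ae_sigmaMeasure μ fun i => hae i

lemma sigmaFun_lintegral (hp0 : p ≠ 0) (hp' : p ≠ ⊤) (x : lp (fun i => Lp ℂ p (μ i)) p) :
    ∫⁻ z, (‖sigmaFun μ p x z‖₊ : ℝ≥0∞) ^ p.toReal ∂(sigmaMeasure μ)
      = ENNReal.ofReal (‖x‖ ^ p.toReal) := by
  have hpr : 0 < p.toReal := ENNReal.toReal_pos hp0 hp'
  rw [sigmaMeasure, lintegral_sum_measure]
  have step1 : ∀ i, ∫⁻ z, (‖sigmaFun μ p x z‖₊ : ℝ≥0∞) ^ p.toReal ∂((μ i).map (Sigma.mk i))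
      = ENNReal.ofReal (‖x i‖ ^ p.toReal) := by
    intro i
    rw [(measurableEmbedding_sigmaMk' i).lintegral_map]
    have h1 : ∫⁻ t, (‖sigmaFun μ p x ⟨i, t⟩‖₊ : ℝ≥0∞) ^ p.toReal ∂(μ i)
        = eLpNorm (x i) p (μ i) ^ p.toReal := by
      rw [eLpNorm_eq_lintegral_rpow_enorm_toReal hp0 hp', ← ENNReal.rpow_mul,
        one_div_mul_cancel hpr.ne', ENNReal.rpow_one]
      rfl
    rw [h1]
    have h2 : eLpNorm (x i) p (μ i) = ENNReal.ofReal ‖x i‖ := by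
      rw [Lp.norm_def, ENNReal.ofReal_toReal (Lp.eLpNorm_ne_top (x i))]
    rw [h2, ← ENNReal.ofReal_rpow_of_nonneg (norm_nonneg _) hpr.le]
  simp_rw [step1]
  rw [← ENNReal.ofReal_tsum_of_nonneg (fun i => Real.rpow_nonneg (norm_nonneg _) _)
    ((lp.memℓp x).summable hpr), lp.norm_rpow_eq_tsum hpr x]

lemma sigmaFun_memLp (hp0 : p ≠ 0) (hp' : p ≠ ⊤) (x : lp (fun i => Lp ℂ p (μ i)) p) :
    MemLp (sigmaFun μ p x) p (sigmaMeasure μ) := by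
  refine ⟨sigmaFun_aesm μ p x, ?_⟩
  rw [eLpNorm_eq_lintegral_rpow_enorm_toReal hp0 hp']
  simp only [enorm_eq_nnnorm]
  rw [sigmaFun_lintegral μ p hp0 hp' x]
  exact ENNReal.rpow_lt_top_of_nonneg (by positivity) ENNReal.ofReal_ne_top

/-- underlying function of the embedding -/
noncomputable def sigmaLpFun (hp0 : p ≠ 0) (hp' : p ≠ ⊤) (x : lp (fun i => Lp ℂ p (μ i)) p) :
    Lp ℂ p (sigmaMeasure μ) :=
  (sigmaFun_memLp μ p hp0 hp' x).toLp _

lemma sigmaLpFun_add (hp0 : p ≠ 0) (hp' : p ≠ ⊤) (x y : lp (fun i => Lp ℂ p (μ i)) p) :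
    sigmaLpFun μ p hp0 hp' (x + y) = sigmaLpFun μ p hp0 hp' x + sigmaLpFun μ p hp0 hp' y := by
  rw [sigmaLpFun, sigmaLpFun, sigmaLpFun, ← MemLp.toLp_add]
  apply MemLp.toLp_congr
  apply ae_sigmaMeasure
  intro i
  have hxy : (↑(x + y) : ∀ j, Lp ℂ p (μ j)) i = x i + y i := by
    rw [lp.coeFn_add]; rfl
  filter_upwards [Lp.coeFn_add (x i) (y i)] with t ht
  show ((↑(x + y) : ∀ j, Lp ℂ p (μ j)) i) t = x i t + y i t
  rw [hxy]
  exact ht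

lemma sigmaLpFun_smul (hp0 : p ≠ 0) (hp' : p ≠ ⊤) (c : ℂ) (x : lp (fun i => Lp ℂ p (μ i)) p) :
    sigmaLpFun μ p hp0 hp' (c • x) = c • sigmaLpFun μ p hp0 hp' x := by
  rw [sigmaLpFun, sigmaLpFun, ← MemLp.toLp_const_smul]
  apply MemLp.toLp_congr
  apply ae_sigmaMeasure
  intro i
  have hcx : (↑(c • x) : ∀ j, Lp ℂ p (μ j)) i = c • x i := by
    rw [lp.coeFn_smul]; rfl
  filter_upwards [Lp.coeFn_smul c (x i)] with t ht
  show ((↑(c • x) : ∀ j, Lp ℂ p (μ j)) i) t = c • (x i t)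
  rw [hcx]
  exact ht

lemma sigmaLpFun_norm (hp0 : p ≠ 0) (hp' : p ≠ ⊤) (x : lp (fun i => Lp ℂ p (μ i)) p) :
    ‖sigmaLpFun μ p hp0 hp' x‖ = ‖x‖ := by
  have hpr : 0 < p.toReal := ENNReal.toReal_pos hp0 hp'
  rw [sigmaLpFun, Lp.norm_toLp, eLpNorm_eq_lintegral_rpow_enorm_toReal hp0 hp']
  simp only [enorm_eq_nnnorm]
  rw [    sigmaFun_lintegral μ p hp0 hp' x, ← ENNReal.ofReal_rpow_of_nonneg (norm_nonneg x) hpr.le,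
    ← ENNReal.rpow_mul, mul_one_div_cancel hpr.ne', ENNReal.rpow_one,
    ENNReal.toReal_ofReal (norm_nonneg x)]

/-- The canonical linear isometry from the `ℓ^p` sum of `L^p` spaces to the `L^p` space
of the sigma type. -/
noncomputable def sigmaLp (hp0 : p ≠ 0) (hp' : p ≠ ⊤) :
    lp (fun i => Lp ℂ p (μ i)) p →ₗᵢ[ℂ] Lp ℂ p (sigmaMeasure μ) where
  toFun := sigmaLpFun μ p hp0 hp'
  map_add' := sigmaLpFun_add μ p hp0 hp'
  map_smul' c x := sigmaLpFun_smul μ p hp0 hp' c x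
  norm_map' := sigmaLpFun_norm μ p hp0 hp'

end Embed

section Abstract

variable {ι : Type*} {G : ι → Type*} [∀ i, NormedAddCommGroup (G i)] [∀ i, NormedSpace ℂ (G i)]
  (p : ℝ≥0∞) [Fact (1 ≤ p)]

lemma p_ne_zero : p ≠ 0 := (lt_of_lt_of_le zero_lt_one (Fact.out : 1 ≤ p)).ne'

/-- The `ℓ^p`-sum of a family of submodules, as a submodule of the `ℓ^p`-sum. -/
def S0 (A : ∀ i, Submodule ℂ (G i)) : Submodule ℂ (lp G p) where
  carrier := {x | ∀ i, (↑x : ∀ j, G j) i ∈ A i}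
  add_mem' := by
    intro x y hx hy i
    have : (↑(x + y) : ∀ j, G j) i = x i + y i := by rw [lp.coeFn_add]; rfl
    rw [this]; exact (A i).add_mem (hx i) (hy i)
  zero_mem' := by
    intro i
    have : (↑(0 : lp G p) : ∀ j, G j) i = 0 := by rw [lp.coeFn_zero]; rfl
    rw [this]; exact (A i).zero_mem
  smul_mem' := by
    intro c x hx i
    have : (↑(c • x) : ∀ j, G j) i = c • x i := by rw [lp.coeFn_smul]; rfl
    rw [this]; exact (A i).smul_mem c (hx i)

lemma lp_eval_continuous (i : ι) : Continuous fun f : lp G p => f i := by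
  apply (LipschitzWith.of_dist_le_mul (K := 1) ?_).continuous
  intro f g
  rw [NNReal.coe_one, one_mul, dist_eq_norm, dist_eq_norm]
  have : f i - g i = (↑(f - g) : ∀ j, G j) i := by rw [lp.coeFn_sub]; rfl
  rw [this]
  exact lp.norm_apply_le_norm (p_ne_zero p) _ i

lemma isClosed_S0 (A : ∀ i, Submodule ℂ (G i)) (hA : ∀ i, IsClosed (A i : Set (G i))) :
    IsClosed (S0 p A : Set (lp G p)) := by
  have : (S0 p A : Set (lp G p)) = ⋂ i, (fun f : lp G p => f i) ⁻¹' (A i) := by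
    ext f
    simp only [SetLike.mem_coe, Set.mem_iInter, Set.mem_preimage]
    rfl
  rw [this]
  exact isClosed_iInter fun i => (hA i).preimage (lp_eval_continuous p i)

variable (A : ∀ i, Submodule ℂ (G i)) (N : ∀ i, Submodule ℂ (A i))

/-- The `i`-th coordinate of an element of `S0 p A`, as an element of `A i`. -/
def coordA (x : S0 p A) (i : ι) : A i := ⟨(↑x : lp G p) i, x.2 i⟩

lemma coordA_add (x y : S0 p A) (i : ι) :
    coordA p A (x + y) i = coordA p A x i + coordA p A y i := by
  apply Subtype.ext
  show (↑(↑x + ↑y : lp G p) : ∀ j, G j) i = _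
  rw [lp.coeFn_add]
  rfl

lemma coordA_smul (c : ℂ) (x : S0 p A) (i : ι) :
    coordA p A (c • x) i = c • coordA p A x i := by
  apply Subtype.ext
  show (↑(c • (↑x : lp G p)) : ∀ j, G j) i = _
  rw [lp.coeFn_smul]
  rfl

lemma norm_coordA (x : S0 p A) (i : ι) : ‖coordA p A x i‖ = ‖(↑x : lp G p) i‖ := rfl

/-- The `ℓ^p`-sum of the submodules `N i`, as a submodule of `S0 p A`. -/
def N0 : Submodule ℂ (S0 p A) where
  carrier := {x | ∀ i, coordA p A x i ∈ N i}
  add_mem' := by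
    intro x y hx hy i
    rw [coordA_add]
    exact (N i).add_mem (hx i) (hy i)
  zero_mem' := by
    intro i
    have : coordA p A 0 i = 0 := by
      apply Subtype.ext
      show (↑(0 : lp G p) : ∀ j, G j) i = 0
      rw [lp.coeFn_zero]
      rfl
    rw [this]
    exact (N i).zero_mem
  smul_mem' := by
    intro c x hx i
    rw [coordA_smul]
    exact (N i).smul_mem c (hx i)

lemma mem_N0_iff {x : S0 p A} : x ∈ N0 p A N ↔ ∀ i, coordA p A x i ∈ N i := Iff.rfl

lemma isClosed_N0 (hN : ∀ i, IsClosed (N i : Set (A i))) :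
    IsClosed (N0 p A N : Set (S0 p A)) := by
  have : (N0 p A N : Set (S0 p A)) = ⋂ i, (fun x : S0 p A => coordA p A x i) ⁻¹' (N i) := by
    ext f
    simp only [SetLike.mem_coe, Set.mem_iInter, Set.mem_preimage]
    rfl
  rw [this]
  refine isClosed_iInter fun i => (hN i).preimage ?_
  apply Continuous.subtype_mk
  exact (lp_eval_continuous p i).comp continuous_subtype_val

end Abstract

section Rep
variable {M : Type*} [NormedAddCommGroup M] [NormedSpace ℂ M]

lemma norm_q_pos (S : Submodule ℂ M) (hS : IsClosed (S : Set M)) {q : M ⧸ S} (hq : q ≠ 0) :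
    0 < ‖q‖ := by
  obtain ⟨m, rfl⟩ := Submodule.Quotient.mk_surjective S q
  rcases (norm_nonneg (Submodule.Quotient.mk m : M ⧸ S)).lt_or_eq with h | h
  · exact h
  · exfalso
    apply hq
    rw [Submodule.Quotient.mk_eq_zero]
    have h2 := (QuotientAddGroup.norm_mk_eq_zero_iff_mem_closure (S := S.toAddSubgroup) (m := m)).1 h.symm
    rw [Submodule.coe_toAddSubgroup, hS.closure_eq] at h2
    exact h2

lemma exists_rep_norm_le (S : Submodule ℂ M) (hS : IsClosed (S : Set M)) (q : M ⧸ S)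
    {ε : ℝ} (hε : 0 < ε) :
    ∃ m : M, Submodule.Quotient.mk m = q ∧ ‖m‖ ≤ (1 + ε) * ‖q‖ := by
  rcases eq_or_ne q 0 with rfl | hq
  · exact ⟨0, by simp, by simp⟩
  · have hq' : 0 < ‖q‖ := norm_q_pos S hS hq
    obtain ⟨m, hm, hlt⟩ := Submodule.Quotient.norm_mk_lt q (mul_pos hε hq')
    exact ⟨m, hm, by nlinarith⟩

end Rep

section Main

variable {ι : Type*} {G : ι → Type*} [∀ i, NormedAddCommGroup (G i)] [∀ i, NormedSpace ℂ (G i)]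
  {E : ι → Type*} [∀ i, NormedAddCommGroup (E i)] [∀ i, NormedSpace ℂ (E i)]
  (p : ℝ≥0∞) [Fact (1 ≤ p)] (hp' : p ≠ ⊤)
  (A : ∀ i, Submodule ℂ (G i)) (N : ∀ i, Submodule ℂ (A i))
  (e : ∀ i, E i ≃ₗᵢ[ℂ] ((A i) ⧸ (N i)))

/-- The coordinatewise quotient map from `S0 p A` to the `ℓ^p`-sum of the `E i`. -/
noncomputable def Tfun (x : S0 p A) : ∀ i, E i :=
  fun i => (e i).symm (Submodule.Quotient.mk (coordA p A x i))

lemma norm_Tfun_le (x : S0 p A) (i : ι) : ‖Tfun p A N e x i‖ ≤ ‖(↑x : lp G p) i‖ := by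
  rw [Tfun, LinearIsometryEquiv.norm_map]
  exact le_trans (Submodule.Quotient.norm_mk_le _ _) (le_of_eq (norm_coordA p A x i))

include hp'

lemma memℓp_Tfun (x : S0 p A) : Memℓp (Tfun p A N e x) p := by
  have hpr : 0 < p.toReal := ENNReal.toReal_pos (p_ne_zero p) hp'
  apply memℓp_gen
  apply Summable.of_nonneg_of_le (fun i => Real.rpow_nonneg (norm_nonneg _) _)
    (fun i => Real.rpow_le_rpow (norm_nonneg _) (norm_Tfun_le p A N e x i) hpr.le)
  exact ((lp.memℓp (↑x : lp G p)).summable hpr)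

/-- `Tfun` as an element of the `ℓ^p`-sum. -/
noncomputable def TfunL (x : S0 p A) : lp E p :=
  ⟨Tfun p A N e x, memℓp_Tfun p hp' A N e x⟩

lemma coe_TfunL (x : S0 p A) : ⇑(TfunL p hp' A N e x) = Tfun p A N e x := rfl

/-- `Tfun` as a linear map into the `ℓ^p`-sum. -/
noncomputable def Tmap : S0 p A →ₗ[ℂ] lp E p where
  toFun := TfunL p hp' A N e
  map_add' x y := by
    apply lp.ext
    rw [lp.coeFn_add, coe_TfunL, coe_TfunL, coe_TfunL]
    funext i
    simp only [Pi.add_apply]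
    rw [Tfun, Tfun, Tfun, coordA_add, Submodule.Quotient.mk_add]
    exact map_add _ _ _
  map_smul' c x := by
    apply lp.ext
    rw [RingHom.id_apply, lp.coeFn_smul, coe_TfunL, coe_TfunL]
    funext i
    simp only [Pi.smul_apply]
    rw [Tfun, Tfun, coordA_smul, Submodule.Quotient.mk_smul]
    exact _root_.map_smul _ _ _

lemma coe_Tmap (x : S0 p A) : ⇑(Tmap p hp' A N e x) = Tfun p A N e x := rfl

lemma norm_Tmap_le (x : S0 p A) : ‖Tmap p hp' A N e x‖ ≤ ‖x‖ := by
  have hpr : 0 < p.toReal := ENNReal.toReal_pos (p_ne_zero p) hp'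
  apply lp.norm_le_of_tsum_le hpr (norm_nonneg x)
  have hx : ‖x‖ ^ p.toReal = ∑' i, ‖(↑x : lp G p) i‖ ^ p.toReal :=
    lp.norm_rpow_eq_tsum hpr (↑x : lp G p)
  rw [hx]
  have hsum := (lp.memℓp (↑x : lp G p)).summable hpr
  have hle : ∀ i, ‖(Tmap p hp' A N e x) i‖ ^ p.toReal ≤ ‖(↑x : lp G p) i‖ ^ p.toReal := by
    intro i
    exact Real.rpow_le_rpow (norm_nonneg _) (norm_Tfun_le p A N e x i) hpr.le
  exact Summable.tsum_le_tsum hle (Summable.of_nonneg_of_le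
    (fun i => Real.rpow_nonneg (norm_nonneg _) _) hle hsum) hsum

lemma Tmap_eq_zero_iff (x : S0 p A) : Tmap p hp' A N e x = 0 ↔ x ∈ N0 p A N := by
  rw [lp.eq_zero_iff_coeFn_eq_zero, coe_Tmap]
  constructor
  · intro hx i
    have h0 : Tfun p A N e x i = 0 := by rw [hx]; rfl
    rw [Tfun] at h0
    have h1 : Submodule.Quotient.mk (coordA p A x i) = (0 : (A i) ⧸ (N i)) := by
      apply (e i).symm.injective
      rw [h0, map_zero]
    exact (Submodule.Quotient.mk_eq_zero _).1 h1
  · intro hx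
    funext i
    show Tfun p A N e x i = (0 : ∀ j, E j) i
    rw [Tfun]
    have h1 : Submodule.Quotient.mk (coordA p A x i) = (0 : (A i) ⧸ (N i)) :=
      (Submodule.Quotient.mk_eq_zero _).2 (hx i)
    rw [h1, map_zero]
    rfl

end Main

section Main2

variable {ι : Type*} {G : ι → Type*} [∀ i, NormedAddCommGroup (G i)] [∀ i, NormedSpace ℂ (G i)]
  {E : ι → Type*} [∀ i, NormedAddCommGroup (E i)] [∀ i, NormedSpace ℂ (E i)]
  (p : ℝ≥0∞) [Fact (1 ≤ p)] (hp' : p ≠ ⊤)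
  (A : ∀ i, Submodule ℂ (G i)) (N : ∀ i, Submodule ℂ (A i))
  (e : ∀ i, E i ≃ₗᵢ[ℂ] ((A i) ⧸ (N i)))

include hp'

lemma exists_Tmap_preimage (hN : ∀ i, IsClosed (N i : Set (A i))) (y : lp E p)
    {ε : ℝ} (hε : 0 < ε) :
    ∃ x : S0 p A, Tmap p hp' A N e x = y ∧ ‖x‖ ≤ (1 + ε) * ‖y‖ := by
  have hpr : 0 < p.toReal := ENNReal.toReal_pos (p_ne_zero p) hp'
  have hsel : ∀ i, ∃ s : A i, Submodule.Quotient.mk s = (e i) (y i)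
      ∧ ‖s‖ ≤ (1 + ε) * ‖y i‖ := by
    intro i
    obtain ⟨s, hs, hnorm⟩ := exists_rep_norm_le (N i) (hN i) ((e i) (y i)) hε
    refine ⟨s, hs, ?_⟩
    rwa [LinearIsometryEquiv.norm_map] at hnorm
  choose s hs hsnorm using hsel
  have hbound : ∀ i, ‖(s i : G i)‖ ^ p.toReal
      ≤ (1 + ε) ^ p.toReal * ‖y i‖ ^ p.toReal := by
    intro i
    rw [← Real.mul_rpow (by positivity) (norm_nonneg _)]
    exact Real.rpow_le_rpow (norm_nonneg _) (hsnorm i) hpr.le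
  have hsummable : Summable fun i => (1 + ε) ^ p.toReal * ‖y i‖ ^ p.toReal :=
    ((lp.memℓp y).summable hpr).mul_left _
  have hmem : Memℓp (fun i => ((s i : G i))) p := by
    apply memℓp_gen
    exact Summable.of_nonneg_of_le (fun i => Real.rpow_nonneg (norm_nonneg _) _)
      hbound hsummable
  set x : lp G p := ⟨fun i => ((s i : G i)), hmem⟩ with hxdef
  have hxS : x ∈ S0 p A := fun i => (s i).2
  refine ⟨⟨x, hxS⟩, ?_, ?_⟩
  · apply lp.ext
    rw [coe_Tmap]
    funext i
    show (e i).symm (Submodule.Quotient.mk (coordA p A ⟨x, hxS⟩ i)) = y i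
    have hcoord : coordA p A ⟨x, hxS⟩ i = s i := Subtype.ext rfl
    rw [hcoord, hs i, LinearIsometryEquiv.symm_apply_apply]
  · show ‖x‖ ≤ (1 + ε) * ‖y‖
    apply lp.norm_le_of_tsum_le hpr (by positivity)
    have h1 : ∑' i, ‖x i‖ ^ p.toReal ≤ (1 + ε) ^ p.toReal * ‖y‖ ^ p.toReal := by
      have h2 : ∑' i, ‖x i‖ ^ p.toReal ≤ ∑' i, (1 + ε) ^ p.toReal * ‖y i‖ ^ p.toReal := by
        apply Summable.tsum_le_tsum hbound _ hsummable
        exact Summable.of_nonneg_of_le (fun i => Real.rpow_nonneg (norm_nonneg _) _)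
          hbound hsummable
      rw [tsum_mul_left, ← lp.norm_rpow_eq_tsum hpr y] at h2
      exact h2
    rwa [Real.mul_rpow (by positivity) (norm_nonneg _)]

variable (hN : ∀ i, IsClosed (N i : Set (A i)))
include hN

/-- The induced map on the quotient. -/
noncomputable def Tquot : ((S0 p A) ⧸ (N0 p A N)) →ₗ[ℂ] lp E p :=
  Submodule.liftQ (N0 p A N) (Tmap p hp' A N e)
    (fun x hx => LinearMap.mem_ker.2 ((Tmap_eq_zero_iff p hp' A N e x).2 hx))

omit hN in
lemma Tquot_mk (x : S0 p A) :
    Tquot p hp' A N e (Submodule.Quotient.mk x) = Tmap p hp' A N e x :=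
  Submodule.liftQ_apply _ _ _

lemma Tquot_injective : Function.Injective (Tquot p hp' A N e) := by
  rw [← LinearMap.ker_eq_bot]
  rw [Submodule.eq_bot_iff]
  intro q hq
  obtain ⟨x, rfl⟩ := Submodule.Quotient.mk_surjective _ q
  rw [LinearMap.mem_ker, Tquot_mk] at hq
  rw [Submodule.Quotient.mk_eq_zero]
  exact (Tmap_eq_zero_iff p hp' A N e x).1 hq

lemma Tquot_surjective : Function.Surjective (Tquot p hp' A N e) := by
  intro y
  obtain ⟨x, hx, -⟩ := exists_Tmap_preimage p hp' A N e hN y one_pos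
  exact ⟨Submodule.Quotient.mk x, by rw [Tquot_mk]; exact hx⟩

lemma norm_Tquot (q : (S0 p A) ⧸ (N0 p A N)) : ‖Tquot p hp' A N e q‖ = ‖q‖ := by
  apply le_antisymm
  · refine le_of_forall_pos_le_add fun δ hδ => ?_
    obtain ⟨x, hx, hlt⟩ := Submodule.Quotient.norm_mk_lt q hδ
    calc ‖Tquot p hp' A N e q‖ = ‖Tmap p hp' A N e x‖ := by rw [← hx, Tquot_mk]
      _ ≤ ‖x‖ := norm_Tmap_le p hp' A N e x
      _ ≤ ‖q‖ + δ := hlt.le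
  · refine le_of_forall_pos_le_add fun δ hδ => ?_
    set y := Tquot p hp' A N e q with hy
    have hε : 0 < δ / (‖y‖ + 1) := by positivity
    obtain ⟨x, hx, hxn⟩ := exists_Tmap_preimage p hp' A N e hN y hε
    have hq : Submodule.Quotient.mk x = q := by
      apply Tquot_injective p hp' A N e hN
      rw [Tquot_mk, hx]
    calc ‖q‖ = ‖(Submodule.Quotient.mk x : (S0 p A) ⧸ (N0 p A N))‖ := by rw [hq]
      _ ≤ ‖x‖ := Submodule.Quotient.norm_mk_le _ _
      _ ≤ (1 + δ / (‖y‖ + 1)) * ‖y‖ := hxn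
      _ ≤ ‖y‖ + δ := by
          have h0 : 0 ≤ ‖y‖ := norm_nonneg y
          rw [add_mul, one_mul, div_mul_eq_mul_div]
          have : δ * ‖y‖ / (‖y‖ + 1) ≤ δ := by
            rw [div_le_iff₀ (by positivity)]
            nlinarith
          linarith

/-- The main isometry: the `ℓ^p`-sum of the quotients is the quotient of the `ℓ^p`-sums. -/
noncomputable def lpQuotIso : lp E p ≃ₗᵢ[ℂ] ((S0 p A) ⧸ (N0 p A N)) :=
  (LinearIsometryEquiv.mk
    (LinearEquiv.ofBijective (Tquot p hp' A N e)
      ⟨Tquot_injective p hp' A N e hN, Tquot_surjective p hp' A N e hN⟩)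
    (fun q => norm_Tquot p hp' A N e hN q)).symm

end Main2

section QuotCongr
variable {F G' : Type*} [NormedAddCommGroup F] [NormedSpace ℂ F]
  [NormedAddCommGroup G'] [NormedSpace ℂ G']

lemma norm_mk_map_le (f : F ≃ₗᵢ[ℂ] G') (M : Submodule ℂ F) (x : F) :
    ‖(Submodule.Quotient.mk (f x) : G' ⧸ M.map (f.toLinearEquiv : F →ₗ[ℂ] G'))‖
      ≤ ‖(Submodule.Quotient.mk x : F ⧸ M)‖ := by
  refine le_of_forall_pos_le_add fun ε hε => ?_
  obtain ⟨m, hm, hlt⟩ := Submodule.Quotient.norm_mk_lt (Submodule.Quotient.mk x : F ⧸ M) hε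
  have hmm : (Submodule.Quotient.mk (f m) :
      G' ⧸ M.map (f.toLinearEquiv : F →ₗ[ℂ] G')) = Submodule.Quotient.mk (f x) := by
    rw [Submodule.Quotient.eq, ← map_sub]
    exact Submodule.mem_map_of_mem ((Submodule.Quotient.eq M).1 hm)
  rw [← hmm]
  calc ‖(Submodule.Quotient.mk (f m) :
        G' ⧸ M.map (f.toLinearEquiv : F →ₗ[ℂ] G'))‖ ≤ ‖f m‖ :=
      Submodule.Quotient.norm_mk_le _ _
    _ = ‖m‖ := f.norm_map m
    _ ≤ ‖(Submodule.Quotient.mk x : F ⧸ M)‖ + ε := hlt.le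

lemma norm_mk_map_ge (f : F ≃ₗᵢ[ℂ] G') (M : Submodule ℂ F) (x : F) :
    ‖(Submodule.Quotient.mk x : F ⧸ M)‖
      ≤ ‖(Submodule.Quotient.mk (f x) : G' ⧸ M.map (f.toLinearEquiv : F →ₗ[ℂ] G'))‖ := by
  refine le_of_forall_pos_le_add fun ε hε => ?_
  obtain ⟨m', hm', hlt⟩ := Submodule.Quotient.norm_mk_lt
    (Submodule.Quotient.mk (f x) : G' ⧸ M.map (f.toLinearEquiv : F →ₗ[ℂ] G')) hε
  have hmm : (Submodule.Quotient.mk (f.symm m') : F ⧸ M) = Submodule.Quotient.mk x := by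
    rw [Submodule.Quotient.eq]
    obtain ⟨w, hw, hweq⟩ := (Submodule.Quotient.eq _).1 hm'
    have hw2 : f.symm m' - x = w := by
      apply f.injective
      rw [map_sub, f.apply_symm_apply]
      exact hweq.symm
    rw [hw2]
    exact hw
  rw [← hmm]
  calc ‖(Submodule.Quotient.mk (f.symm m') : F ⧸ M)‖ ≤ ‖f.symm m'‖ :=
      Submodule.Quotient.norm_mk_le _ _
    _ = ‖m'‖ := f.symm.norm_map m'
    _ ≤ _ + ε := hlt.le

/-- A linear isometric equivalence descends to quotients. -/
noncomputable def quotCongrLIE (f : F ≃ₗᵢ[ℂ] G') (M : Submodule ℂ F) :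
    (F ⧸ M) ≃ₗᵢ[ℂ] (G' ⧸ M.map (f.toLinearEquiv : F →ₗ[ℂ] G')) where
  toLinearEquiv := Submodule.Quotient.equiv M _ f.toLinearEquiv rfl
  norm_map' := by
    intro q
    obtain ⟨x, rfl⟩ := Submodule.Quotient.mk_surjective M q
    have happ : (Submodule.Quotient.equiv M (M.map (f.toLinearEquiv : F →ₗ[ℂ] G'))
        f.toLinearEquiv rfl) (Submodule.Quotient.mk x) = Submodule.Quotient.mk (f x) := by
      simp [Submodule.Quotient.equiv, Submodule.mapQ_apply]
    rw [happ]
    exact le_antisymm (norm_mk_map_le f M x) (norm_mk_map_ge f M x)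

end QuotCongr

section MapSub

variable {V W : Type*} [NormedAddCommGroup V] [NormedSpace ℂ V]
  [NormedAddCommGroup W] [NormedSpace ℂ W]

/-- A linear isometry restricts to an isometric equivalence from a submodule onto its image. -/
noncomputable def isoMapSub (J : V →ₗᵢ[ℂ] W) (S : Submodule ℂ V) :
    S ≃ₗᵢ[ℂ] (S.map J.toLinearMap) where
  toLinearEquiv := Submodule.equivMapOfInjective J.toLinearMap J.injective S
  norm_map' := by
    intro x
    have hc : ((Submodule.equivMapOfInjective J.toLinearMap J.injective S x) : W)
        = J x := Submodule.coe_equivMapOfInjective_apply _ _ _ _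
    calc ‖Submodule.equivMapOfInjective J.toLinearMap J.injective S x‖
        = ‖((Submodule.equivMapOfInjective J.toLinearMap J.injective S x) : W)‖ := rfl
      _ = ‖J (x : V)‖ := by rw [hc]
      _ = ‖(x : V)‖ := J.norm_map _
      _ = ‖x‖ := rfl

end MapSub

end Machinery

/-- If `(E_α)_{α ∈ Λ}` is a family of `QSL_p`-spaces (`1 < p < ∞`),
then the `ℓ^p`-direct sum `ℓ^p-⊕_{α ∈ Λ} E_α` is again a `QSL_p`-space. -/
theorem stmt6 (p : ENNReal) [Fact (1 ≤ p)] (hp : 1 < p) (hp' : p ≠ ⊤)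
    (Λ : Type) (Eα : Λ → Type*)
    [∀ α, NormedAddCommGroup (Eα α)] [∀ α, NormedSpace ℂ (Eα α)]
    (h : ∀ α, IsQSLp p (Eα α)) :
    IsQSLp p (lp Eα p) := by
  have hp0 : p ≠ 0 := (zero_lt_one.trans hp).ne'
  choose X mX μ A N hA hN hE using h
  letI : ∀ α, MeasurableSpace (X α) := mX
  let e : ∀ α, Eα α ≃ₗᵢ[ℂ] ((A α) ⧸ (N α)) := fun α => (hE α).some
  let J := sigmaLp μ p hp0 hp'
  let Φ := isoMapSub J (S0 p A)
  refine ⟨(Σ α, X α), inferInstance, sigmaMeasure μ,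
    (S0 p A).map J.toLinearMap,
    (N0 p A N).map (Φ.toLinearEquiv :
      (S0 p A) →ₗ[ℂ] ((S0 p A).map J.toLinearMap)), ?_, ?_, ?_⟩
  · have h1 : IsComplete ((S0 p A : Set (lp (fun α => Lp ℂ p (μ α)) p))) :=
      (isClosed_S0 p A hA).isComplete
    have h2 : IsComplete (⇑J '' (S0 p A)) :=
      (isComplete_image_iff J.isometry.isUniformInducing).2 h1
    rw [Submodule.map_coe]
    exact h2.isClosed
  · rw [Submodule.map_coe]
    exact Φ.toHomeomorph.isClosedMap _ (isClosed_N0 p A N hN)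
  · exact ⟨(lpQuotIso p hp' A N e hN).trans (quotCongrLIE Φ (N0 p A N))⟩
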